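/- Let S(u) := max(0, 1 − |u|) be the linear B-spline, Δx, Δv > 0, R ∈ ℝ, and set x_i := i·Δx for i ∈ ℤ and v_j := −R + j·Δv for j ∈ ℤ. Let A be a finite index set, ω : A → ℝ weights, and (X_a, V_a) ∈ ℝ² points for a ∈ A. Define the deposited grid values f_{i,j} := Σ_{a∈A} ω_a · S((x_i − X_a)/Δx) · S((v_j − V_a)/Δv). Then Σ_{(i,j)∈ℤ²} v_j · f_{i,j} = Σ_{a∈A} ω_a · V_a. -/

import Mathlib

/-- The hat function vanishes away from `⌊y⌋, ⌊y⌋+1`. -/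
lemma hat_zero (y : ℝ) {i : ℤ} (h : i ∉ ({⌊y⌋, ⌊y⌋ + 1} : Finset ℤ)) :
    max 0 (1 - |(i : ℝ) - y|) = 0 := by
  simp only [Finset.mem_insert, Finset.mem_singleton, not_or] at h
  have hy1 : (⌊y⌋ : ℝ) ≤ y := Int.floor_le y
  have hy2 : y < (⌊y⌋ : ℝ) + 1 := Int.lt_floor_add_one y
  rcases lt_or_gt_of_ne h.1 with hlt | hgt
  · have : (i : ℝ) ≤ (⌊y⌋ : ℝ) - 1 := by exact_mod_cast Int.le_sub_one_of_lt hlt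
    have h1 : 1 ≤ |(i : ℝ) - y| := by
      rw [abs_sub_comm, abs_of_nonneg (by linarith)]; linarith
    exact max_eq_left (by linarith)
  · have hgt' : ⌊y⌋ + 2 ≤ i := by omega
    have : (⌊y⌋ : ℝ) + 2 ≤ (i : ℝ) := by exact_mod_cast hgt'
    have h1 : 1 ≤ |(i : ℝ) - y| := by
      rw [abs_of_nonneg (by linarith)]; linarith
    exact max_eq_left (by linarith)

lemma hat_summable (c d y : ℝ) :
    Summable (fun i : ℤ => (c + d * (i : ℝ)) * max 0 (1 - |(i : ℝ) - y|)) := by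
  apply summable_of_ne_finset_zero (s := {⌊y⌋, ⌊y⌋ + 1})
  intro i hi
  rw [hat_zero y hi, mul_zero]

/-- Key identity: affine moment of the linear B-spline on the integer grid. -/
lemma hat_sum (c d y : ℝ) :
    ∑' i : ℤ, (c + d * (i : ℝ)) * max 0 (1 - |(i : ℝ) - y|) = c + d * y := by
  rw [tsum_eq_sum (s := {⌊y⌋, ⌊y⌋ + 1})
    (fun i hi => by rw [hat_zero y hi, mul_zero])]
  have hne : (⌊y⌋ : ℤ) ≠ ⌊y⌋ + 1 := by omega
  rw [Finset.sum_pair hne]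
  have hy1 : (⌊y⌋ : ℝ) ≤ y := Int.floor_le y
  have hy2 : y < (⌊y⌋ : ℝ) + 1 := Int.lt_floor_add_one y
  have h1 : max 0 (1 - |(↑⌊y⌋ : ℝ) - y|) = 1 - (y - ⌊y⌋) := by
    rw [abs_sub_comm, abs_of_nonneg (by linarith), max_eq_right (by linarith)]
  have h2 : max 0 (1 - |((↑(⌊y⌋ + 1) : ℝ)) - y|) = y - ⌊y⌋ := by
    push_cast
    rw [abs_of_nonneg (by linarith), max_eq_right (by linarith)]
    ring
  rw [h1, h2]
  push_cast
  ring

theorem deposition_conserves_momentum {ι : Type*}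
    (Δx Δv R : ℝ) (hΔx : 0 < Δx) (hΔv : 0 < Δv)
    (A : Finset ι) (ω X V : ι → ℝ) :
    ∑' p : ℤ × ℤ,
        ((-R + (p.2 : ℝ) * Δv) *
          ∑ a ∈ A, ω a * max 0 (1 - |((p.1 : ℝ) * Δx - X a) / Δx|)
            * max 0 (1 - |((-R + (p.2 : ℝ) * Δv) - V a) / Δv|))
      = ∑ a ∈ A, ω a * V a := by
  set gx : ι → ℤ → ℝ := fun a i => max 0 (1 - |(i : ℝ) - X a / Δx|) with hgx
  set gv : ι → ℤ → ℝ := fun a j =>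
    (-R + Δv * (j : ℝ)) * max 0 (1 - |(j : ℝ) - (V a + R) / Δv|) with hgv
  have hxarg : ∀ (a : ι) (i : ℤ), ((i : ℝ) * Δx - X a) / Δx = (i : ℝ) - X a / Δx := by
    intro a i; field_simp
  have hvarg : ∀ (a : ι) (j : ℤ),
      ((-R + (j : ℝ) * Δv) - V a) / Δv = (j : ℝ) - (V a + R) / Δv := by
    intro a j; field_simp; ring
  have hsum_gx : ∀ a, Summable (gx a) := by
    intro a
    have := hat_summable 1 0 (X a / Δx)
    simpa [hgx] using this
  have hsum_gv : ∀ a, Summable (gv a) := by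
    intro a
    have := hat_summable (-R) Δv ((V a + R) / Δv)
    simpa [hgv] using this
  have htsum_gx : ∀ a, ∑' i, gx a i = 1 := by
    intro a
    have := hat_sum 1 0 (X a / Δx)
    simpa [hgx] using this
  have htsum_gv : ∀ a, ∑' j, gv a j = V a := by
    intro a
    have := hat_sum (-R) Δv ((V a + R) / Δv)
    have h2 : -R + Δv * ((V a + R) / Δv) = V a := by field_simp; ring
    rw [h2] at this
    simpa [hgv] using this
  have hrw : ∀ p : ℤ × ℤ,
      ((-R + (p.2 : ℝ) * Δv) *
          ∑ a ∈ A, ω a * max 0 (1 - |((p.1 : ℝ) * Δx - X a) / Δx|)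
            * max 0 (1 - |((-R + (p.2 : ℝ) * Δv) - V a) / Δv|))
        = ∑ a ∈ A, ω a * (gx a p.1 * gv a p.2) := by
    intro p
    rw [Finset.mul_sum]
    refine Finset.sum_congr rfl fun a _ => ?_
    rw [hxarg a p.1, hvarg a p.2]
    simp only [hgx, hgv]
    ring
  rw [tsum_congr hrw]
  have hprod : ∀ a, Summable (fun p : ℤ × ℤ => gx a p.1 * gv a p.2) := by
    intro a
    apply summable_of_ne_finset_zero
      (s := ({⌊X a / Δx⌋, ⌊X a / Δx⌋ + 1} : Finset ℤ) ×ˢ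
            ({⌊(V a + R) / Δv⌋, ⌊(V a + R) / Δv⌋ + 1} : Finset ℤ))
    intro p hp
    rw [Finset.mem_product, not_and_or] at hp
    rcases hp with h | h
    · have : gx a p.1 = 0 := hat_zero _ h
      rw [this]; ring
    · have : gv a p.2 = 0 := by
        simp only [hgv]; rw [hat_zero _ h]; ring
      rw [this]; ring
  rw [Summable.tsum_finsetSum (fun a _ => (hprod a).mul_left (ω a))]
  refine Finset.sum_congr rfl fun a _ => ?_
  rw [tsum_mul_left]
  rw [Summable.tsum_prod' (hprod a) (fun i => (hsum_gv a).mul_left (gx a i))]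
  simp_rw [tsum_mul_left, htsum_gv a, tsum_mul_right, htsum_gx a]
  ring
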